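/- Let K be a nonempty perfect closed subset of an open interval I ⊆ ℝ such that every point of K is an endpoint of some connected component of I \ K. Then K is countable, totally disconnected, and perfect — contradicting the fact that every nonempty perfect compact subset of ℝ is uncountable. Hence no such K exists. -/

import Mathlib

open Set

lemma frontier_subset_aux {a b : ℝ} (C : Set ℝ) (hC : IsConnected C) (hCsub : C ⊆ Ioo a b) :
    frontier C ⊆ {sInf C, sSup C} := by
  have hbb : BddBelow C := (bddBelow_Ioo : BddBelow (Ioo a b)).mono hCsub
  have hba : BddAbove C := (bddAbove_Ioo (a := a) (b := b)).mono hCsub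
  intro z hz
  have h1 : z ∈ closure C := hz.1
  have h2 : z ∈ Icc (sInf C) (sSup C) :=
    closure_minimal (subset_Icc_csInf_csSup hbb hba) isClosed_Icc h1
  by_contra hne
  simp only [mem_insert_iff, mem_singleton_iff, not_or] at hne
  have hzi : z ∈ Ioo (sInf C) (sSup C) :=
    ⟨lt_of_le_of_ne h2.1 (Ne.symm hne.1), lt_of_le_of_ne h2.2 hne.2⟩
  exact hz.2 (interior_maximal (hC.Ioo_csInf_csSup_subset hbb hba) isOpen_Ioo hzi)

lemma uncountable_nat_bool : ¬ Countable (ℕ → Bool) := by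
  intro h
  classical
  have hg : Function.Injective (fun s : Set ℕ => fun n => decide (n ∈ s)) := by
    intro s t hst
    ext n
    have := congrFun hst n
    simpa [decide_eq_decide] using this
  have : Countable (Set ℕ) := hg.countable
  obtain ⟨f, hf⟩ := this.exists_injective_nat
  exact Function.cantor_injective f hf

/-- There is no nonempty perfect set `K`, closed in an open interval
`I = Ioo a b`, such that every point of `K` is a boundary point (endpoint) of some
connected component of `I \ K`.  (Such a `K` would be a countable perfect compact
set, contradicting that nonempty perfect complete sets are uncountable.) -/
theorem stmt_1 (a b : ℝ) (K : Set ℝ) (hab : a < b)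
    (hKI : K ⊆ Ioo a b) (hne : K.Nonempty)
    (hclosed : closure K ∩ Ioo a b ⊆ K)
    (hperfect : ∀ x ∈ K, x ∈ closure (K \ {x}))
    (hend : ∀ x ∈ K, ∃ y ∈ Ioo a b \ K,
      x ∈ frontier (connectedComponentIn (Ioo a b \ K) y)) :
    False := by
  set U : Set ℝ := Ioo a b \ K with hU
  have hUopen : IsOpen U := by
    have : U = Ioo a b ∩ (closure K)ᶜ := by
      ext z
      constructor
      · rintro ⟨hz1, hz2⟩
        exact ⟨hz1, fun hc => hz2 (hclosed ⟨hc, hz1⟩)⟩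
      · rintro ⟨hz1, hz2⟩
        exact ⟨hz1, fun hc => hz2 (subset_closure hc)⟩
    rw [this]
    exact isOpen_Ioo.inter isClosed_closure.isOpen_compl
  -- For each x ∈ K choose the component of U whose frontier contains x
  have key : ∀ x : K, ∃ C : Set ℝ, IsConnected C ∧ C ⊆ Ioo a b ∧ IsOpen C ∧
      (x : ℝ) ∈ frontier C ∧ ∀ q ∈ C, connectedComponentIn U q = C := by
    rintro ⟨x, hx⟩
    obtain ⟨y, hy, hfr⟩ := hend x hx
    exact ⟨connectedComponentIn U y,
      isConnected_connectedComponentIn_iff.mpr hy,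
      (connectedComponentIn_subset U y).trans diff_subset,
      hUopen.connectedComponentIn, hfr,
      fun q hq => (connectedComponentIn_eq hq).symm⟩
  choose C hCconn hCsub hCopen hCfr hCeq using key
  -- x is sInf or sSup of its component
  have hside : ∀ x : K, (x : ℝ) = sInf (C x) ∨ (x : ℝ) = sSup (C x) := by
    intro x
    have := frontier_subset_aux (C x) (hCconn x) (hCsub x) (hCfr x)
    simpa using this
  -- choose a rational in each component
  have hq : ∀ x : K, ∃ q : ℚ, (q : ℝ) ∈ C x := by
    intro x
    obtain ⟨q, hq⟩ := Rat.denseRange_cast.exists_mem_open (hCopen x) (hCconn x).nonempty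
    exact ⟨q, hq⟩
  choose q hqmem using hq
  -- injectivity of x ↦ (rational in component, which side)
  have hKc : K.Countable := by
    rw [← Set.countable_coe_iff]
    have hinj : Function.Injective
        (fun x : K => (q x, decide ((x : ℝ) = sInf (C x)))) := by
      intro x y hxy
      simp only [Prod.mk.injEq, decide_eq_decide] at hxy
      have hCxy : C x = C y := by
        rw [← hCeq x _ (hqmem x), ← hCeq y _ (hqmem y)]
        rw [hxy.1]
      by_cases h : (x : ℝ) = sInf (C x)
      · have hy' : (y : ℝ) = sInf (C y) := hxy.2.mp h
        exact Subtype.ext (by rw [h, hy', hCxy])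
      · have hx' := (hside x).resolve_left h
        have hy' : (y : ℝ) = sSup (C y) := by
          rcases hside y with h2 | h2
          · exact absurd (hxy.2.mpr h2) h
          · exact h2
        exact Subtype.ext (by rw [hx', hy', hCxy])
    exact hinj.countable
  -- closure K is countable
  have hclKc : (closure K).Countable := by
    have hsub : closure K ⊆ K ∪ {a, b} := by
      intro z hz
      have hz' : z ∈ Icc a b :=
        closure_minimal (hKI.trans Ioo_subset_Icc_self) isClosed_Icc hz
      rcases eq_or_lt_of_le hz'.1 with h1 | h1
      · exact Or.inr (Or.inl h1.symm)
      rcases eq_or_lt_of_le hz'.2 with h2 | h2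
      · exact Or.inr (Or.inr h2)
      exact Or.inl (hclosed ⟨hz, h1, h2⟩)
    exact (hKc.union ((countable_singleton b).insert a)).mono hsub
  -- closure K is perfect and nonempty, hence uncountable: contradiction
  have hpre : Preperfect K := by
    intro x hx
    rw [accPt_iff_nhds]
    intro V hV
    have := hperfect x hx
    rw [mem_closure_iff_nhds] at this
    obtain ⟨w, hwV, hwK, hwx⟩ := this V hV
    exact ⟨w, ⟨hwV, hwK⟩, hwx⟩
  have hperfC : Perfect (closure K) := hpre.perfect_closure
  have hneC : (closure K).Nonempty := hne.mono subset_closure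
  obtain ⟨f, hfr, -, hfinj⟩ := hperfC.exists_nat_bool_injection hneC
  have : Countable (ℕ → Bool) := by
    have hcnt : Countable (closure K) := hclKc.to_subtype
    have : Function.Injective (fun g : ℕ → Bool =>
        (⟨f g, hfr ⟨g, rfl⟩⟩ : closure K)) := fun g₁ g₂ h =>
      hfinj (congrArg Subtype.val h)
    exact this.countable
  exact uncountable_nat_bool this
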